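/- Let Γ be a connected Coxeter graph with canonical root system Φ. If there exist s, t ∈ S with m_{s,t} ≥ 4 (possibly ∞), then the equivalence relation ≡ on Φ generated by α ≡₁ β ⟺ ⟨α,β⟩ ∉ {0,1,-1} has only one equivalence class. -/

import Mathlib

open Real

/-- A Coxeter matrix on the set `S`, with `0` representing the label `∞`. -/
structure CoxeterMat (S : Type*) where
  m : S → S → ℕ
  diagonal : ∀ s, m s s = 1
  symmetric : ∀ s t, m s t = m t s
  off_diagonal : ∀ s t, s ≠ t → m s t ≠ 1

namespace CoxeterMat

variable {S : Type*} (M : CoxeterMat S)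

/-- The coefficient `⟨α_s, α_t⟩ = -2 cos (π / m_{s,t})`, with value `-2` when `m_{s,t} = ∞`. -/
noncomputable def c (s t : S) : ℝ :=
  if M.m s t = 0 then -2 else -2 * Real.cos (Real.pi / (M.m s t : ℝ))

/-- The simple root `α_s` in `V = ⊕_{s ∈ S} ℝ α_s`. -/
noncomputable def sroot (s : S) : S →₀ ℝ := Finsupp.single s 1

/-- The canonical bilinear form of the Coxeter graph. -/
noncomputable def bform : (S →₀ ℝ) →ₗ[ℝ] (S →₀ ℝ) →ₗ[ℝ] ℝ :=
  Finsupp.lift _ ℝ S fun s => Finsupp.lift ℝ ℝ S fun t => M.c s t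

/-- The simple reflection `σ_s : x ↦ x - ⟨α_s, x⟩ α_s`. -/
noncomputable def sigma (s : S) : (S →₀ ℝ) →ₗ[ℝ] (S →₀ ℝ) :=
  LinearMap.id - (M.bform (sroot s)).smulRight (sroot s)

/-- The Coxeter group `W`, realized as the subgroup of linear automorphisms of `V`
generated by the simple reflections. -/
noncomputable def Wgrp : Subgroup ((S →₀ ℝ) ≃ₗ[ℝ] (S →₀ ℝ)) :=
  Subgroup.closure {w | ∃ s : S, (w : (S →₀ ℝ) →ₗ[ℝ] (S →₀ ℝ)) = M.sigma s}

/-- The canonical root system `Φ = {w(α_s) | w ∈ W, s ∈ S}`. -/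
def Phi : Set (S →₀ ℝ) := {b | ∃ w ∈ M.Wgrp, ∃ s : S, b = w (sroot s)}

/-- The set of positive roots. -/
def PhiPos : Set (S →₀ ℝ) := {b | b ∈ M.Phi ∧ ∀ s, 0 ≤ b s}

/-- The equivalence relation `≡` on `Φ` generated by `α ≡₁ β ⟺ ⟨α, β⟩ ∉ {0, 1, -1}`. -/
def equivR : (S →₀ ℝ) → (S →₀ ℝ) → Prop :=
  Relation.EqvGen (fun a b => a ∈ M.Phi ∧ b ∈ M.Phi ∧ M.bform a b ∉ ({0, 1, -1} : Set ℝ))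

/-- The underlying graph of the Coxeter graph: `s` and `t` are joined iff `m_{s,t} ≥ 3`
(including `m_{s,t} = ∞`). -/
def graph : SimpleGraph S where
  Adj s t := s ≠ t ∧ M.m s t ≠ 2
  symm := ⟨fun s t h => ⟨h.1.symm, by rw [M.symmetric]; exact h.2⟩⟩
  loopless := ⟨fun s h => h.1 rfl⟩

/-- The action of a permutation of `S` on `V`. -/
noncomputable def permV (g : Equiv.Perm S) : (S →₀ ℝ) ≃ₗ[ℝ] (S →₀ ℝ) :=
  Finsupp.domLCongr g

/-- The set of elements of `W` fixed by the group `G` of symmetries (acting by conjugation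
by the corresponding permutations of coordinates). -/
noncomputable def WfixG (G : Subgroup (Equiv.Perm S)) :
    Set ((S →₀ ℝ) ≃ₗ[ℝ] (S →₀ ℝ)) :=
  {w | w ∈ M.Wgrp ∧ ∀ g ∈ G, permV g * w = w * permV g}

/-- Construct a simply laced Coxeter matrix from an adjacency relation. -/
noncomputable def ofAdj (A : S → S → Prop) (hs : ∀ s t, A s t → A t s)
    (hi : ∀ s, ¬ A s s) : CoxeterMat S where
  m s t := open Classical in if s = t then 1 else if A s t then 3 else 2
  diagonal s := by simp
  symmetric s t := by
    classical
    by_cases h : s = t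
    · subst h; rfl
    · have h' : t ≠ s := Ne.symm h
      simp only [if_neg h, if_neg h']
      by_cases hA : A s t
      · rw [if_pos hA, if_pos (hs s t hA)]
      · rw [if_neg hA, if_neg (fun h2 => hA (hs t s h2))]
  off_diagonal s t h := by
    classical
    simp only [if_neg h]
    split <;> norm_num

/-- Isomorphism of Coxeter graphs. -/
def Iso {T : Type*} (M : CoxeterMat S) (N : CoxeterMat T) : Prop :=
  ∃ e : S ≃ T, ∀ s t, N.m (e s) (e t) = M.m s t

/-- The full Coxeter subgraph spanned by `Y ⊆ S`. -/
def restrict (Y : Set S) : CoxeterMat Y where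
  m s t := M.m s t
  diagonal s := M.diagonal s
  symmetric s t := M.symmetric s t
  off_diagonal s t h := M.off_diagonal s t (fun hh => h (Subtype.ext hh))

end CoxeterMat

open CoxeterMat

/-- The Coxeter graph `A_n`: a path with `n` vertices. -/
noncomputable def pathA (n : ℕ) : CoxeterMat (Fin n) :=
  ofAdj (fun i j => i.val + 1 = j.val ∨ j.val + 1 = i.val)
    (fun _ _ h => h.symm)
    (fun s h => by rcases h with h | h <;> omega)

/-- The Coxeter graph `D_n`: a path `0 — 1 — ⋯ — (n-2)` together with an extra vertex `n-1`
joined to `n-3`. -/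
noncomputable def Dmat (n : ℕ) : CoxeterMat (Fin n) :=
  ofAdj (fun i j => i ≠ j ∧
      (((i.val + 1 = j.val ∧ j.val ≤ n - 2) ∨ (i.val + 2 = j.val ∧ j.val = n - 1)) ∨
       ((j.val + 1 = i.val ∧ i.val ≤ n - 2) ∨ (j.val + 2 = i.val ∧ i.val = n - 1))))
    (fun _ _ h => ⟨h.1.symm, h.2.symm⟩)
    (fun s h => h.1 rfl)

/-- Adjacency relation determined by a list of edges. -/
def listAdj {n : ℕ} (L : List (Fin n × Fin n)) (i j : Fin n) : Prop :=
  (i, j) ∈ L ∨ (j, i) ∈ L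

instance {n : ℕ} (L : List (Fin n × Fin n)) (i j : Fin n) : Decidable (listAdj L i j) := by
  unfold listAdj; infer_instance

/-- The Coxeter graph `E₆`. -/
noncomputable def E6mat : CoxeterMat (Fin 6) :=
  ofAdj (listAdj [(0,2),(2,3),(3,4),(4,5),(1,3)])
    (fun _ _ h => h.symm) (by decide)

/-- The Coxeter graph `E₇`. -/
noncomputable def E7mat : CoxeterMat (Fin 7) :=
  ofAdj (listAdj [(0,2),(2,3),(3,4),(4,5),(5,6),(1,3)])
    (fun _ _ h => h.symm) (by decide)

/-- The Coxeter graph `E₈`. -/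
noncomputable def E8mat : CoxeterMat (Fin 8) :=
  ofAdj (listAdj [(0,2),(2,3),(3,4),(4,5),(5,6),(6,7),(1,3)])
    (fun _ _ h => h.symm) (by decide)

/-- The Coxeter graph `A_∞`: the one-sided infinite path. -/
noncomputable def Ainf : CoxeterMat ℕ :=
  ofAdj (fun i j => i + 1 = j ∨ j + 1 = i)
    (fun _ _ h => h.symm)
    (fun s h => by omega)

/-- The Coxeter graph `_∞A_∞`: the two-sided infinite path. -/
noncomputable def ZAinf : CoxeterMat ℤ :=
  ofAdj (fun i j => i + 1 = j ∨ j + 1 = i)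
    (fun _ _ h => h.symm)
    (fun s h => by omega)

/-- The Coxeter graph `D_∞`: vertices `0, 1, 2, 3, …` with `0` and `1` joined to `2` and a
path `2 — 3 — 4 — ⋯`. -/
noncomputable def Dinf : CoxeterMat ℕ :=
  ofAdj (fun i j => i ≠ j ∧
      (((i = 0 ∧ j = 2) ∨ (i = 1 ∧ j = 2) ∨ (i + 1 = j ∧ 2 ≤ i)) ∨
       ((j = 0 ∧ i = 2) ∨ (j = 1 ∧ i = 2) ∨ (j + 1 = i ∧ 2 ≤ j))))
    (fun _ _ h => ⟨h.1.symm, h.2.symm⟩)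
    (fun s h => h.1 rfl)

/-- The affine Coxeter graph `Ã_n`: a cycle with `n + 1` vertices. -/
noncomputable def affA (n : ℕ) : CoxeterMat (ZMod (n + 1)) :=
  ofAdj (fun i j => i ≠ j ∧ (i + 1 = j ∨ j + 1 = i))
    (fun _ _ h => ⟨h.1.symm, h.2.symm⟩)
    (fun s h => h.1 rfl)

/-- The affine Coxeter graph `D̃_n` (on `n + 1` vertices, Bourbaki numbering): `0` and `1`
joined to `2`, a path `2 — 3 — ⋯ — (n-1)`, and `n` joined to `n-2`. -/
noncomputable def affD (n : ℕ) : CoxeterMat (Fin (n + 1)) :=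
  ofAdj (fun i j => i ≠ j ∧
      (((i.val = 0 ∧ j.val = 2) ∨ (i.val = 1 ∧ j.val = 2) ∨
        (i.val + 1 = j.val ∧ 2 ≤ i.val ∧ i.val ≤ n - 2) ∨
        (i.val = n - 2 ∧ j.val = n)) ∨
       ((j.val = 0 ∧ i.val = 2) ∨ (j.val = 1 ∧ i.val = 2) ∨
        (j.val + 1 = i.val ∧ 2 ≤ j.val ∧ j.val ≤ n - 2) ∨
        (j.val = n - 2 ∧ i.val = n))))
    (fun _ _ h => ⟨h.1.symm, h.2.symm⟩)
    (fun s h => h.1 rfl)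

/-- The affine Coxeter graph `Ẽ₆` (Bourbaki numbering, affine vertex `0`). -/
noncomputable def affE6 : CoxeterMat (Fin 7) :=
  ofAdj (listAdj [(1,3),(3,4),(4,5),(5,6),(2,4),(0,2)])
    (fun _ _ h => h.symm) (by decide)

/-- The affine Coxeter graph `Ẽ₇` (Bourbaki numbering, affine vertex `0`). -/
noncomputable def affE7 : CoxeterMat (Fin 8) :=
  ofAdj (listAdj [(0,1),(1,3),(3,4),(4,5),(5,6),(6,7),(2,4)])
    (fun _ _ h => h.symm) (by decide)

/-- The affine Coxeter graph `Ẽ₈` (Bourbaki numbering, affine vertex `0`). -/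
noncomputable def affE8 : CoxeterMat (Fin 9) :=
  ofAdj (listAdj [(1,3),(3,4),(4,5),(5,6),(6,7),(7,8),(2,4),(0,8)])
    (fun _ _ h => h.symm) (by decide)

namespace CoxeterMat

variable {S : Type*} (M : CoxeterMat S)

lemma c_symm (s t : S) : M.c s t = M.c t s := by
  unfold c; rw [M.symmetric]

lemma c_diag (s : S) : M.c s s = 2 := by
  unfold c
  rw [M.diagonal]
  norm_num

lemma sqrt2_gt_one : (1:ℝ) < Real.sqrt 2 := by
  nlinarith [Real.sq_sqrt (by norm_num : (0:ℝ) ≤ 2), Real.sqrt_nonneg 2]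

lemma sqrt2_le_two : Real.sqrt 2 ≤ 2 := by
  nlinarith [Real.sq_sqrt (by norm_num : (0:ℝ) ≤ 2), Real.sqrt_nonneg 2]

lemma c_nonpos {s t : S} (h : s ≠ t) : M.c s t ≤ 0 := by
  unfold c
  split
  · norm_num
  · rename_i hm0
    have hm : 2 ≤ M.m s t := by have := M.off_diagonal s t h; omega
    have h1 : (0:ℝ) < (M.m s t : ℝ) := by positivity
    have h2 : 0 ≤ Real.cos (Real.pi / (M.m s t : ℝ)) := by
      apply Real.cos_nonneg_of_mem_Icc
      constructor
      · have : 0 ≤ Real.pi / (M.m s t : ℝ) := by positivity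
        linarith [Real.pi_pos]
      · rw [div_le_div_iff₀ h1 (by norm_num : (0:ℝ) < 2)]
        have h2m : (2:ℝ) ≤ (M.m s t : ℝ) := by exact_mod_cast hm
        nlinarith [Real.pi_pos, mul_le_mul_of_nonneg_left h2m Real.pi_pos.le]
    nlinarith

lemma c_le_neg_one {s t : S} (h : s ≠ t) (hm : M.m s t ≠ 2) : M.c s t ≤ -1 := by
  unfold c
  split
  · norm_num
  · rename_i hm0
    have hm3 : 3 ≤ M.m s t := by have := M.off_diagonal s t h; omega
    have h1 : (0:ℝ) < (M.m s t : ℝ) := by positivity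
    have h3 : (3:ℝ) ≤ (M.m s t : ℝ) := by exact_mod_cast hm3
    have hle : Real.pi / (M.m s t : ℝ) ≤ Real.pi / 3 := by
      apply div_le_div_of_nonneg_left Real.pi_pos.le (by norm_num) h3
    have h2 : Real.cos (Real.pi / 3) ≤ Real.cos (Real.pi / (M.m s t : ℝ)) := by
      apply Real.cos_le_cos_of_nonneg_of_le_pi (by positivity) _ hle
      nlinarith [Real.pi_pos]
    rw [Real.cos_pi_div_three] at h2
    nlinarith

lemma c_le_neg_sqrt2 {s t : S} (h : M.m s t = 0 ∨ 4 ≤ M.m s t) :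
    M.c s t ≤ -Real.sqrt 2 := by
  unfold c
  split
  · linarith [sqrt2_le_two]
  · rename_i hm0
    have hm4 : 4 ≤ M.m s t := by omega
    have h1 : (0:ℝ) < (M.m s t : ℝ) := by positivity
    have h4 : (4:ℝ) ≤ (M.m s t : ℝ) := by exact_mod_cast hm4
    have hle : Real.pi / (M.m s t : ℝ) ≤ Real.pi / 4 := by
      apply div_le_div_of_nonneg_left Real.pi_pos.le (by norm_num) h4
    have h2 : Real.cos (Real.pi / 4) ≤ Real.cos (Real.pi / (M.m s t : ℝ)) := by
      apply Real.cos_le_cos_of_nonneg_of_le_pi (by positivity) _ hle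
      nlinarith [Real.pi_pos]
    rw [Real.cos_pi_div_four] at h2
    linarith

lemma notBad_of_le {x : ℝ} (h : x ≤ -Real.sqrt 2) : x ∉ ({0, 1, -1} : Set ℝ) := by
  have := sqrt2_gt_one
  intro hx
  rcases hx with h0 | h1 | h2 <;> simp_all <;> linarith

lemma notBad_of_ge {x : ℝ} (h : Real.sqrt 2 ≤ x) : x ∉ ({0, 1, -1} : Set ℝ) := by
  have := sqrt2_gt_one
  intro hx
  rcases hx with h0 | h1 | h2 <;> simp_all <;> linarith

lemma bform_single_left (s : S) (a : ℝ) (y : S →₀ ℝ) :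
    M.bform (Finsupp.single s a) y =
      a * ((Finsupp.lift ℝ ℝ S fun t => M.c s t) y) := by
  unfold bform
  rw [Finsupp.lift_apply, Finsupp.sum_single_index (by simp)]
  simp

lemma bform_sroot_apply (v : S) (γ : S →₀ ℝ) :
    M.bform (sroot v) γ = γ.sum fun x a => a * M.c v x := by
  rw [sroot, bform_single_left, Finsupp.lift_apply]
  rw [one_mul]
  congr 1

lemma bform_sroot_sroot (s t : S) : M.bform (sroot s) (sroot t) = M.c s t := by
  rw [bform_sroot_apply]
  unfold sroot
  rw [Finsupp.sum_single_index (by simp)]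
  simp

lemma bform_single_single (s t : S) (a b : ℝ) :
    M.bform (Finsupp.single s a) (Finsupp.single t b) = a * b * M.c s t := by
  rw [bform_single_left, Finsupp.lift_apply, Finsupp.sum_single_index (by simp)]
  simp [mul_assoc]

lemma bform_symm (x y : S →₀ ℝ) : M.bform x y = M.bform y x := by
  induction x using Finsupp.induction_linear with
  | zero => simp
  | add a b ha hb => simp [map_add, ha, hb]
  | single s a =>
    induction y using Finsupp.induction_linear with
    | zero => simp
    | add a' b' ha' hb' => simp [map_add, ha', hb']
    | single t b => rw [bform_single_single, bform_single_single, c_symm]; ring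

lemma sigma_apply (r : S) (x : S →₀ ℝ) :
    M.sigma r x = x - (M.bform (sroot r) x) • sroot r := rfl

lemma bform_sigma_self (r : S) (x : S →₀ ℝ) :
    M.bform (sroot r) (M.sigma r x) = - M.bform (sroot r) x := by
  rw [sigma_apply, map_sub, map_smul, smul_eq_mul, bform_sroot_sroot, c_diag]
  ring

lemma bform_sigma (r : S) (x y : S →₀ ℝ) :
    M.bform (M.sigma r x) (M.sigma r y) = M.bform x y := by
  simp only [sigma_apply, map_sub, map_smul, LinearMap.sub_apply, LinearMap.smul_apply,
    smul_eq_mul, bform_sroot_sroot, c_diag]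
  rw [M.bform_symm x (sroot r)]
  ring

lemma sigma_sigma (r : S) (x : S →₀ ℝ) : M.sigma r (M.sigma r x) = x := by
  rw [sigma_apply (x := M.sigma r x), bform_sigma_self, sigma_apply]
  module

/-- `σ_r` as a linear automorphism. -/
noncomputable def sigmaE (r : S) : (S →₀ ℝ) ≃ₗ[ℝ] (S →₀ ℝ) :=
  LinearEquiv.ofLinear (M.sigma r) (M.sigma r)
    (LinearMap.ext fun x => M.sigma_sigma r x)
    (LinearMap.ext fun x => M.sigma_sigma r x)

@[simp] lemma sigmaE_apply (r : S) (x : S →₀ ℝ) : M.sigmaE r x = M.sigma r x := rfl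

lemma sigmaE_mem (r : S) : M.sigmaE r ∈ M.Wgrp :=
  Subgroup.subset_closure ⟨r, rfl⟩

lemma sroot_mem_Phi (u : S) : sroot u ∈ M.Phi :=
  ⟨1, one_mem _, u, rfl⟩

lemma Phi_smul {w : (S →₀ ℝ) ≃ₗ[ℝ] (S →₀ ℝ)} (hw : w ∈ M.Wgrp) {b : S →₀ ℝ}
    (hb : b ∈ M.Phi) : w b ∈ M.Phi := by
  obtain ⟨w', hw', u, rfl⟩ := hb
  exact ⟨w * w', mul_mem hw hw', u, rfl⟩

lemma bform_W {w : (S →₀ ℝ) ≃ₗ[ℝ] (S →₀ ℝ)} (hw : w ∈ M.Wgrp) (x y : S →₀ ℝ) :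
    M.bform (w x) (w y) = M.bform x y := by
  revert x y
  refine Subgroup.closure_induction ?_ ?_ ?_ ?_ hw
  · rintro w' ⟨r, hr⟩ x y
    have h1 : w' x = M.sigma r x := by rw [← hr]; rfl
    have h2 : w' y = M.sigma r y := by rw [← hr]; rfl
    rw [h1, h2, bform_sigma]
  · intro x y; rfl
  · intro a b _ _ ha hb x y
    have : ∀ z, (a * b) z = a (b z) := fun z => rfl
    rw [this, this, ha, hb]
  · intro a _ ha x y
    have h1 : ∀ z, a (a⁻¹ z) = z := fun z => a.apply_symm_apply z
    calc M.bform (a⁻¹ x) (a⁻¹ y) = M.bform (a (a⁻¹ x)) (a (a⁻¹ y)) := (ha _ _).symm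
      _ = M.bform x y := by rw [h1, h1]

lemma equivR_rel {a b : S →₀ ℝ} (ha : a ∈ M.Phi) (hb : b ∈ M.Phi)
    (h : M.bform a b ∉ ({0, 1, -1} : Set ℝ)) : M.equivR a b :=
  Relation.EqvGen.rel _ _ ⟨ha, hb, h⟩

lemma equivR_W {w : (S →₀ ℝ) ≃ₗ[ℝ] (S →₀ ℝ)} (hw : w ∈ M.Wgrp) {a b : S →₀ ℝ}
    (h : M.equivR a b) : M.equivR (w a) (w b) := by
  induction h with
  | rel a b hab =>
    exact Relation.EqvGen.rel _ _
      ⟨M.Phi_smul hw hab.1, M.Phi_smul hw hab.2.1, by rw [bform_W M hw]; exact hab.2.2⟩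
  | refl a => exact Relation.EqvGen.refl _
  | symm a b _ ih => exact Relation.EqvGen.symm _ _ ih
  | trans a b cc _ _ ih1 ih2 => exact Relation.EqvGen.trans _ _ _ ih1 ih2

lemma adj_c {v w : S} (h : M.graph.Adj v w) : M.c v w ≤ -1 :=
  M.c_le_neg_one h.1 h.2

/-- Key estimate: if `γ` has nonnegative coordinates, vanishes at `v`, and has a coordinate
`≥ √2` at a vertex `w` with `c v w ≤ -1`, then `⟨α_v, γ⟩ ≤ -√2`. -/
lemma pairing_le {v w : S} {γ : S →₀ ℝ} (hpos : ∀ x, 0 ≤ γ x) (hvz : γ v = 0)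
    (hw : M.c v w ≤ -1) (hgw : Real.sqrt 2 ≤ γ w) :
    M.bform (sroot v) γ ≤ -Real.sqrt 2 := by
  classical
  rw [bform_sroot_apply, Finsupp.sum]
  have hwmem : w ∈ γ.support := by
    rw [Finsupp.mem_support_iff]
    intro h0
    rw [h0] at hgw
    linarith [sqrt2_gt_one]
  rw [← Finset.sum_erase_add _ _ hwmem]
  have h1 : γ w * M.c v w ≤ -Real.sqrt 2 := by nlinarith [sqrt2_gt_one]
  have h2 : ∑ x ∈ γ.support.erase w, γ x * M.c v x ≤ 0 := by
    apply Finset.sum_nonpos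
    intro x hx
    have hxv : x ≠ v := by
      intro h; subst h
      exact (Finsupp.mem_support_iff.mp (Finset.mem_of_mem_erase hx)) hvz
    have := M.c_nonpos (Ne.symm hxv)
    nlinarith [hpos x, M.c_symm v x]
  linarith

lemma sigma_coord_self (v : S) (γ : S →₀ ℝ) :
    (M.sigma v γ) v = γ v - M.bform (sroot v) γ := by
  rw [sigma_apply, Finsupp.sub_apply, Finsupp.smul_apply, sroot, Finsupp.single_eq_same,
    smul_eq_mul, mul_one]

lemma sigma_coord_ne (v : S) (γ : S →₀ ℝ) {x : S} (hx : x ≠ v) :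
    (M.sigma v γ) x = γ x := by
  classical
  rw [sigma_apply, Finsupp.sub_apply, Finsupp.smul_apply, sroot,
    Finsupp.single_eq_of_ne' (Ne.symm hx), smul_eq_mul, mul_zero, sub_zero]

lemma walk_lemma (ρ : S →₀ ℝ) :
    ∀ {v u : S} (p : M.graph.Walk v u) (γ : S →₀ ℝ),
      p.support.Nodup → (∀ x, 0 ≤ γ x) → γ ∈ M.Phi → M.equivR γ ρ →
      M.bform (sroot v) γ ≤ -Real.sqrt 2 →
      (∀ x ∈ p.support.tail, γ x = 0) →
      M.equivR (sroot u) ρ := by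
  intro v u p
  induction p with
  | nil =>
    intro γ _ _ hΦ hρ hpair _
    exact Relation.EqvGen.trans _ _ _
      (M.equivR_rel (M.sroot_mem_Phi _) hΦ (notBad_of_le hpair)) hρ
  | @cons v v' u hadj q ih =>
    intro γ hnd hpos hΦ hρ hpair htail
    rw [SimpleGraph.Walk.support_cons, List.nodup_cons] at hnd
    obtain ⟨hvq, hndq⟩ := hnd
    have htail' : ∀ x ∈ q.support, γ x = 0 := by
      intro x hx
      exact htail x (by rwa [SimpleGraph.Walk.support_cons, List.tail_cons])
    set d := M.bform (sroot v) γ with hd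
    set γ' := M.sigma v γ with hγ'
    have hcoordv : γ' v = γ v - d := by
      rw [hγ', sigma_coord_self, hd]
    have hcoord : ∀ x, x ≠ v → γ' x = γ x := by
      intro x hx
      rw [hγ', sigma_coord_ne _ _ _ hx]
    have hpos' : ∀ x, 0 ≤ γ' x := by
      intro x
      by_cases hx : x = v
      · rw [hx, hcoordv]; have := hpos v; have := sqrt2_gt_one; linarith
      · rw [hcoord x hx]; exact hpos x
    have hΦ' : γ' ∈ M.Phi := by
      have h := M.Phi_smul (M.sigmaE_mem v) hΦ
      rwa [sigmaE_apply] at h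
    have hρ' : M.equivR γ' ρ := by
      have e1 : M.equivR γ' (sroot v) := by
        apply M.equivR_rel hΦ' (M.sroot_mem_Phi v)
        rw [M.bform_symm γ' (sroot v), hγ', bform_sigma_self]
        exact notBad_of_ge (by linarith)
      have e2 : M.equivR (sroot v) γ :=
        M.equivR_rel (M.sroot_mem_Phi v) hΦ (notBad_of_le hpair)
      exact Relation.EqvGen.trans _ _ _ e1 (Relation.EqvGen.trans _ _ _ e2 hρ)
    have hv'q : v' ∈ q.support := q.start_mem_support
    have hv'v : v' ≠ v := fun h => hvq (h ▸ hv'q)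
    have hpair' : M.bform (sroot v') γ' ≤ -Real.sqrt 2 := by
      apply M.pairing_le hpos'
      · rw [hcoord v' hv'v]; exact htail' v' hv'q
      · exact M.adj_c hadj.symm
      · rw [hcoordv]; have := hpos v; linarith
    have htail'' : ∀ x ∈ q.support.tail, γ' x = 0 := by
      intro x hx
      have hxq : x ∈ q.support := List.mem_of_mem_tail hx
      have hxv : x ≠ v := fun h => hvq (h ▸ hxq)
      rw [hcoord x hxv]
      exact htail' x hxq
    exact ih γ' hndq hpos' hΦ' hρ' hpair' htail''

lemma sigma_sroot (a b : S) :
    M.sigma a (sroot b) = sroot b - (M.c a b) • sroot a := by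
  rw [sigma_apply, bform_sroot_sroot]

lemma sigma_sroot_coord_a {a b : S} (hab : a ≠ b) :
    (M.sigma a (sroot b)) a = -M.c a b := by
  classical
  rw [sigma_sroot, Finsupp.sub_apply, Finsupp.smul_apply, sroot, sroot,
    Finsupp.single_eq_of_ne' hab.symm, Finsupp.single_eq_same, smul_eq_mul, mul_one]
  ring

lemma sigma_sroot_coord_b {a b : S} (hab : a ≠ b) :
    (M.sigma a (sroot b)) b = 1 := by
  classical
  rw [sigma_sroot, Finsupp.sub_apply, Finsupp.smul_apply, sroot, sroot,
    Finsupp.single_eq_of_ne' hab, Finsupp.single_eq_same, smul_eq_mul, mul_zero, sub_zero]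

lemma sigma_sroot_coord_other {a b x : S} (hxa : x ≠ a) (hxb : x ≠ b) :
    (M.sigma a (sroot b)) x = 0 := by
  classical
  rw [sigma_sroot, Finsupp.sub_apply, Finsupp.smul_apply, sroot, sroot,
    Finsupp.single_eq_of_ne' hxb.symm, Finsupp.single_eq_of_ne' hxa.symm, smul_eq_mul,
    mul_zero, sub_zero]

lemma reach_lemma {s t : S} (hst : s ≠ t) (hc : M.c s t ≤ -Real.sqrt 2) :
    ∀ {u : S} (p : M.graph.Walk s u), p.IsPath → t ∉ p.support →
      M.equivR (sroot u) (sroot s) := by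
  intro u p
  cases p with
  | nil => intro _ _; exact Relation.EqvGen.refl _
  | @cons _ v₁ _ hadj q =>
    intro hp ht
    rw [SimpleGraph.Walk.cons_isPath_iff] at hp
    obtain ⟨hq, hsq⟩ := hp
    set γ₀ := M.sigma s (sroot t) with hγ₀
    have hγ₀s : γ₀ s = -M.c s t := by
      rw [hγ₀, M.sigma_sroot_coord_a hst]
    have hγ₀coord : ∀ x, x ≠ s → x ≠ t → γ₀ x = 0 := by
      intro x hxs hxt
      rw [hγ₀, M.sigma_sroot_coord_other hxs hxt]
    have hγ₀t : γ₀ t = 1 := by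
      rw [hγ₀, M.sigma_sroot_coord_b hst]
    have hpos : ∀ x, 0 ≤ γ₀ x := by
      intro x
      by_cases hxs : x = s
      · rw [hxs, hγ₀s]; have := sqrt2_gt_one; linarith
      · by_cases hxt : x = t
        · rw [hxt, hγ₀t]; norm_num
        · rw [hγ₀coord x hxs hxt]
    have hΦ : γ₀ ∈ M.Phi := by
      have h := M.Phi_smul (M.sigmaE_mem s) (M.sroot_mem_Phi t)
      rwa [sigmaE_apply] at h
    have hρ : M.equivR γ₀ (sroot s) := by
      apply M.equivR_rel hΦ (M.sroot_mem_Phi s)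
      rw [M.bform_symm γ₀ (sroot s), hγ₀, bform_sigma_self, bform_sroot_sroot]
      exact notBad_of_ge (by linarith)
    have hnotin : ∀ x ∈ q.support, x ≠ s ∧ x ≠ t := by
      intro x hx
      refine ⟨fun h => hsq (h ▸ hx), fun h => ht ?_⟩
      rw [SimpleGraph.Walk.support_cons]
      exact List.mem_cons_of_mem _ (h ▸ hx)
    have hv₁ := hnotin v₁ q.start_mem_support
    have hpair : M.bform (sroot v₁) γ₀ ≤ -Real.sqrt 2 := by
      apply M.pairing_le hpos (hγ₀coord v₁ hv₁.1 hv₁.2)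
      · exact M.adj_c hadj.symm
      · rw [hγ₀s]; linarith
    exact M.walk_lemma (sroot s) q γ₀ hq.support_nodup hpos hΦ hρ hpair
      (fun x hx => (fun h => hγ₀coord x h.1 h.2) (hnotin x (List.mem_of_mem_tail hx)))

lemma simple_equiv (hconn : M.graph.Connected) {s t : S} (hst : s ≠ t)
    (hc : M.c s t ≤ -Real.sqrt 2) (u : S) : M.equivR (sroot u) (sroot s) := by
  classical
  have hts : M.c t s ≤ -Real.sqrt 2 := by rwa [← c_symm]
  have hTS : M.equivR (sroot t) (sroot s) :=
    M.equivR_rel (M.sroot_mem_Phi t) (M.sroot_mem_Phi s)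
      (by rw [bform_sroot_sroot]; exact notBad_of_le hts)
  obtain ⟨w⟩ := hconn.preconnected s u
  set p := w.toPath.1 with hp
  have hpath : p.IsPath := w.toPath.2
  by_cases htm : t ∈ p.support
  · set q := p.dropUntil t htm with hq
    have hqpath : q.IsPath := hpath.dropUntil htm
    have hsq : s ∉ q.support := by
      intro hs
      have hspec := p.take_spec htm
      have hsupp : p.support = (p.takeUntil t htm).support ++ q.support.tail := by
        rw [← SimpleGraph.Walk.support_append, hspec]
      have hnd : p.support.Nodup := hpath.support_nodup
      rw [hsupp] at hnd
      have hdisj := List.disjoint_of_nodup_append hnd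
      have hs1 : s ∈ (p.takeUntil t htm).support := SimpleGraph.Walk.start_mem_support _
      have hs2 : s ∈ q.support.tail := by
        have := SimpleGraph.Walk.support_eq_cons q
        rw [this] at hs
        rcases hs with _ | _
        · exact absurd rfl hst
        · assumption
      exact hdisj hs1 hs2
    exact Relation.EqvGen.trans _ _ _
      (M.reach_lemma (Ne.symm hst) hts q hqpath hsq) hTS
  · exact M.reach_lemma hst hc p hpath htm

lemma sigma_base (hconn : M.graph.Connected) {s t : S} (hst : s ≠ t)
    (hc : M.c s t ≤ -Real.sqrt 2) (r : S) :
    M.equivR (M.sigma r (sroot s)) (sroot s) := by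
  have hΦσ : M.sigma r (sroot s) ∈ M.Phi := by
    have h := M.Phi_smul (M.sigmaE_mem r) (M.sroot_mem_Phi s)
    rwa [sigmaE_apply] at h
  by_cases h0 : M.c r s = 0
  · rw [sigma_sroot, h0, zero_smul, sub_zero]
    exact Relation.EqvGen.refl _
  by_cases h1 : M.c r s = -1
  · -- use the heavy edge `s — t`
    have hrt : r ≠ t := by
      intro he
      rw [he, c_symm] at h1
      have := sqrt2_gt_one
      rw [h1] at hc
      linarith
    have hpair : M.bform (sroot t) (M.sigma r (sroot s)) ≤ -Real.sqrt 2 := by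
      rw [sigma_sroot, map_sub, map_smul, smul_eq_mul, bform_sroot_sroot,
        bform_sroot_sroot, h1]
      have h2 : M.c t r ≤ 0 := M.c_nonpos (Ne.symm hrt)
      have h3 : M.c t s ≤ -Real.sqrt 2 := by rwa [c_symm] at hc
      linarith
    have e1 : M.equivR (M.sigma r (sroot s)) (sroot t) := by
      apply M.equivR_rel hΦσ (M.sroot_mem_Phi t)
      rw [M.bform_symm]
      exact notBad_of_le hpair
    exact Relation.EqvGen.trans _ _ _ e1 (M.simple_equiv hconn hst hc t)
  · -- `c r s ∉ {0, 1, -1}`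
    have hcr1 : M.c r s ≠ 1 := by
      by_cases hrs : r = s
      · rw [hrs, c_diag]; norm_num
      · have := M.c_nonpos hrs; intro he; rw [he] at this; linarith
    have e1 : M.equivR (M.sigma r (sroot s)) (sroot r) := by
      apply M.equivR_rel hΦσ (M.sroot_mem_Phi r)
      rw [M.bform_symm, bform_sigma_self, bform_sroot_sroot]
      intro hmem
      simp only [Set.mem_insert_iff, Set.mem_singleton_iff, neg_eq_zero] at hmem
      rcases hmem with ha | hb | hcc
      · exact h0 ha
      · exact h1 (by linarith)
      · exact hcr1 (by linarith)
    exact Relation.EqvGen.trans _ _ _ e1 (M.simple_equiv hconn hst hc r)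

lemma base_W (hconn : M.graph.Connected) {s t : S} (hst : s ≠ t)
    (hc : M.c s t ≤ -Real.sqrt 2) {w : (S →₀ ℝ) ≃ₗ[ℝ] (S →₀ ℝ)} (hw : w ∈ M.Wgrp) :
    M.equivR (w (sroot s)) (sroot s) := by
  refine Subgroup.closure_induction ?_ ?_ ?_ ?_ hw
  · rintro w' ⟨r, hr⟩
    have h1 : w' (sroot s) = M.sigma r (sroot s) := by rw [← hr]; rfl
    rw [h1]
    exact M.sigma_base hconn hst hc r
  · exact Relation.EqvGen.refl _
  · intro a b hamem hbmem ha hb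
    have h1 : (a * b) (sroot s) = a (b (sroot s)) := rfl
    rw [h1]
    exact Relation.EqvGen.trans _ _ _ (M.equivR_W hamem hb) ha
  · intro a hamem ha
    have h1 : a⁻¹ (a (sroot s)) = sroot s := a.symm_apply_apply _
    have h2 := M.equivR_W (inv_mem hamem) ha
    rw [h1] at h2
    exact Relation.EqvGen.symm _ _ h2

end CoxeterMat

/-- If a connected Coxeter graph has two vertices `s, t` with `m_{s,t} ≥ 4` (possibly `∞`),
then the equivalence relation `≡` on `Φ` has only one equivalence class. -/
theorem stmt7 {S : Type*} (M : CoxeterMat S) (hconn : M.graph.Connected)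
    (s t : S) (h : M.m s t = 0 ∨ 4 ≤ M.m s t) :
    ∀ a ∈ M.Phi, ∀ b ∈ M.Phi, M.equivR a b := by
  have hst : s ≠ t := by
    intro he
    rw [he, M.diagonal] at h
    omega
  have hc : M.c s t ≤ -Real.sqrt 2 := M.c_le_neg_sqrt2 h
  have key : ∀ a ∈ M.Phi, M.equivR a (sroot s) := by
    rintro a ⟨w, hw, u, rfl⟩
    exact Relation.EqvGen.trans _ _ _
      (M.equivR_W hw (M.simple_equiv hconn hst hc u))
      (M.base_W hconn hst hc hw)
  intro a ha b hb
  exact Relation.EqvGen.trans _ _ _ (key a ha) (Relation.EqvGen.symm _ _ (key b hb))
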